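/- Let k ≥ 3, ℓ ≥ 1. Let M = (α_1 ⋯ α_k) be a 2^ℓ × k complex matrix of rank 2, let R_1,…,R_r be tensors of arity n on domain size k with R_1 non-degenerate, and let G_1,…,G_g be column tensors of arity n on domain size k, and suppose there are tensors R̲_i, G̲_j of arity n on domain size 2^ℓ with R_i = R̲_i M^{⊗n} for all i and M^{⊗n} G_j = G̲_j for all j. Then there exist σ ≠ τ in Fin k with columns α_σ, α_τ linearly independent, a 2 × k matrix X_{σ,τ} of rank 2 with (α_σ α_τ)·X_{σ,τ} = M, and, setting M_{(2)} = (α_σ α_τ), it holds that: M_{(2)} has rank 2, Ř_i = R̲_i M_{(2)}^{⊗n} and M_{(2)}^{⊗n} Ǧ_j = G̲_j for all i, j (where Ř_i, Ǧ_j are the restrictions to {0,1} of R_i (X'_{σ,τ})^{⊗n} and (X'^{-1}_{σ,τ})^{⊗n} G_j for any invertible k × k matrix X'_{σ,τ} with X_{σ,τ}·X'_{σ,τ} = [[1,0,…,0],[0,1,0,…,0]]), and M = M_{(2)} X_{σ,τ}, so that R_i = R̲_i (M_{(2)} X_{σ,τ})^{⊗n} and (M_{(2)} X_{σ,τ})^{⊗n}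 G_j = G̲_j for all i, j. -/

import Mathlib

open Matrix BigOperators

/-- A tensor of arity `n` on domain size `k` is degenerate if it is a tensor
product of vectors. -/
def Degenerate {n k : ℕ} (R : (Fin n → Fin k) → ℂ) : Prop :=
  ∃ v : Fin n → (Fin k → ℂ), ∀ i, R i = ∏ t, v t (i t)

/-- The recognizer transform `R̲ M^{⊗n}` of a tensor `R̲` on domain `D`
under a matrix `M` with rows indexed by `D` and columns indexed by `E`. -/
noncomputable def rtrans {n : ℕ} {D E : Type*} [Fintype D] (M : Matrix D E ℂ)
    (R : (Fin n → D) → ℂ) : (Fin n → E) → ℂ :=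
  fun i => ∑ j : Fin n → D, R j * ∏ t, M (j t) (i t)

/-- The generator transform `M^{⊗n} G` of a column tensor `G` on domain `E`
under a matrix `M` with rows indexed by `D` and columns indexed by `E`. -/
noncomputable def gtrans {n : ℕ} {D E : Type*} [Fintype E] (M : Matrix D E ℂ)
    (G : (Fin n → E) → ℂ) : (Fin n → D) → ℂ :=
  fun s => ∑ i : Fin n → E, (∏ t, M (s t) (i t)) * G i

/-- The restriction `R^{(σ,τ)}` of a tensor on domain size `k` to `{σ, τ}`. -/
def restrict {n k : ℕ} (R : (Fin n → Fin k) → ℂ) (σ τ : Fin k) :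
    (Fin n → Fin 2) → ℂ :=
  fun j => R fun t => if j t = 0 then σ else τ

/-- The submatrix `(α_σ α_τ)` formed by the columns `σ` and `τ` of `M`. -/
def subM {D : Type*} {k : ℕ} (M : Matrix D (Fin k) ℂ) (σ τ : Fin k) :
    Matrix D (Fin 2) ℂ :=
  Matrix.of fun i c => if c = 0 then M i σ else M i τ

/-- The `t`-th signature matrix `A_R(t)` of a tensor on domain size 2. -/
def sigMatrix {n : ℕ} (R : (Fin n → Fin 2) → ℂ) (t : Fin n) :
    Matrix (Fin 2) ({s : Fin n // s ≠ t} → Fin 2) ℂ :=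
  Matrix.of fun b i => R fun s => if h : s = t then b else i ⟨s, h⟩

/-- The two-column matrix `A_{σ,τ}(R)`, with rows indexed by a position `t`
and an assignment of domain values to the remaining positions. -/
def Amat {n k : ℕ} (R : (Fin n → Fin k) → ℂ) (σ τ : Fin k) :
    Matrix (Σ t : Fin n, ({s : Fin n // s ≠ t} → Fin k)) (Fin 2) ℂ :=
  Matrix.of fun p c =>
    R fun s => if h : s = p.1 then (if c = 0 then σ else τ) else p.2 ⟨s, h⟩

/-- The column vector `b_w(R)`. -/
def bvec {n k : ℕ} (R : (Fin n → Fin k) → ℂ) (w : Fin k) :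
    (Σ t : Fin n, ({s : Fin n // s ≠ t} → Fin k)) → ℂ :=
  fun p => R fun s => if h : s = p.1 then w else p.2 ⟨s, h⟩

/-- The `2 × k` matrix `[[1,0,0,…,0],[0,1,0,…,0]]`. -/
def projMat (k : ℕ) : Matrix (Fin 2) (Fin k) ℂ :=
  Matrix.of fun r c => if (r : ℕ) = (c : ℕ) then 1 else 0


section Aux

lemma rtrans_comp {n : ℕ} {D E F : Type*} [Fintype D] [Fintype E]
    (M : Matrix D E ℂ) (X : Matrix E F ℂ) (R : (Fin n → D) → ℂ) :
    rtrans X (rtrans M R) = rtrans (M * X) R := by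
  funext i
  unfold rtrans
  simp only [Finset.sum_mul, Matrix.mul_apply]
  rw [Finset.sum_comm]
  refine Finset.sum_congr rfl fun j _ => ?_
  simp only [Finset.prod_univ_sum, Fintype.piFinset_univ, Finset.mul_sum]
  refine Finset.sum_congr rfl fun c _ => ?_
  rw [Finset.prod_mul_distrib, mul_assoc]

lemma gtrans_comp {n : ℕ} {D E F : Type*} [Fintype E] [Fintype F]
    (M : Matrix D E ℂ) (X : Matrix E F ℂ) (G : (Fin n → F) → ℂ) :
    gtrans M (gtrans X G) = gtrans (M * X) G := by
  funext s
  unfold gtrans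
  simp only [Finset.mul_sum, Matrix.mul_apply]
  rw [Finset.sum_comm]
  refine Finset.sum_congr rfl fun c _ => ?_
  simp only [Finset.prod_univ_sum, Fintype.piFinset_univ, Finset.sum_mul]
  refine Finset.sum_congr rfl fun i _ => ?_
  rw [Finset.prod_mul_distrib, mul_assoc]

lemma mulproj_apply {D : Type*} {k : ℕ} (A : Matrix D (Fin 2) ℂ) (x : D) (c : Fin k) :
    (A * projMat k) x c = A x 0 * (if (c : ℕ) = 0 then 1 else 0)
      + A x 1 * (if (c : ℕ) = 1 then 1 else 0) := by
  simp [Matrix.mul_apply, Fin.sum_univ_two, projMat, eq_comm]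

lemma mulproj_lo {D : Type*} {k : ℕ} (hk : 3 ≤ k) (A : Matrix D (Fin 2) ℂ) (x : D)
    (b : Fin 2) :
    (A * projMat k) x (if b = 0 then (⟨0, by omega⟩ : Fin k) else ⟨1, by omega⟩) = A x b := by
  fin_cases b <;> simp [mulproj_apply]

lemma mulproj_hi {D : Type*} {k : ℕ} (A : Matrix D (Fin 2) ℂ) (x : D)
    {c : Fin k} (hc : 2 ≤ (c : ℕ)) : (A * projMat k) x c = 0 := by
  rw [mulproj_apply]
  rw [if_neg (by omega), if_neg (by omega)]
  ring

lemma restr_rtrans {n k : ℕ} {D : Type*} [Fintype D] (hk : 3 ≤ k)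
    (A : Matrix D (Fin 2) ℂ) (R : (Fin n → D) → ℂ) :
    restrict (rtrans (A * projMat k) R) ⟨0, by omega⟩ ⟨1, by omega⟩ = rtrans A R := by
  funext b
  show rtrans (A * projMat k) R _ = _
  unfold rtrans
  refine Finset.sum_congr rfl fun j _ => ?_
  congr 1
  refine Finset.prod_congr rfl fun t _ => ?_
  exact mulproj_lo hk A (j t) (b t)

lemma gtrans_restr {n k : ℕ} {D : Type*} (hk : 3 ≤ k)
    (A : Matrix D (Fin 2) ℂ) (H : (Fin n → Fin k) → ℂ) :
    gtrans A (restrict H ⟨0, by omega⟩ ⟨1, by omega⟩)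
      = gtrans (A * projMat k) H := by
  funext s
  unfold gtrans
  set e : (Fin n → Fin 2) → (Fin n → Fin k) :=
    fun b t => if b t = 0 then ⟨0, by omega⟩ else ⟨1, by omega⟩ with he
  have hinj : Function.Injective e := by
    intro b b' h
    funext t
    have h2 := congrFun h t
    have hb := (b t).isLt
    have hb' := (b' t).isLt
    simp only [he] at h2
    by_cases h0 : b t = 0 <;> by_cases h1 : b' t = 0 <;>
      simp [h0, h1, Fin.ext_iff] at h2 ⊢ <;> omega
  have hzero : ∀ i ∈ Finset.univ, i ∉ Finset.image e Finset.univ →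
      (∏ t, (A * projMat k) (s t) (i t)) * H i = 0 := by
    intro i _ hi
    have hex : ∃ t, 2 ≤ (i t : ℕ) := by
      by_contra hc
      push_neg at hc
      refine hi (Finset.mem_image.2 ⟨fun t => if (i t : ℕ) = 0 then 0 else 1,
        Finset.mem_univ _, ?_⟩)
      funext t
      have hct := hc t
      simp only [he]
      by_cases h0 : (i t : ℕ) = 0
      · simp only [h0, if_pos rfl]
        exact (Fin.ext h0.symm)
      · simp only [if_neg h0]
        rw [if_neg (by exact one_ne_zero)]
        exact Fin.ext (by simp; omega)
    obtain ⟨t, ht⟩ := hex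
    rw [Finset.prod_eq_zero (Finset.mem_univ t)
      (show (A * projMat k) (s t) (i t) = 0 from mulproj_hi A (s t) ht), zero_mul]
  rw [← Finset.sum_subset (Finset.subset_univ (Finset.image e Finset.univ)) hzero,
      Finset.sum_image (fun b _ b' _ h => hinj h)]
  refine Finset.sum_congr rfl fun b _ => ?_
  congr 1
  refine Finset.prod_congr rfl fun t _ => ?_
  exact (mulproj_lo hk A (s t) (b t)).symm

end Aux

/-- (Forward direction of Theorem 3.3, together with
Corollary 4.2.) If `R_1, …, R_r` (with `R_1` non-degenerate) and
`G_1, …, G_g` are simultaneously realizable on a `2^ℓ × k` basis `M` of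
rank 2, then there are `σ ≠ τ` with linearly independent columns, a rank-2
matrix `X_{σ,τ}` with `(α_σ α_τ) X_{σ,τ} = M`, such that the checked
signatures are simultaneously realizable on `M_{(2)} = (α_σ α_τ)` of rank 2,
and the original signatures are realizable on `M_{(2)} X_{σ,τ}`. -/
theorem collapse_forward {k ℓ n r g : ℕ} (hk : 3 ≤ k) (hℓ : 1 ≤ ℓ)
    (hr : 1 ≤ r) (M : Matrix (Fin (2 ^ ℓ)) (Fin k) ℂ) (hM : M.rank = 2)
    (R : Fin r → (Fin n → Fin k) → ℂ) (G : Fin g → (Fin n → Fin k) → ℂ)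
    (R0 : Fin r → (Fin n → Fin (2 ^ ℓ)) → ℂ)
    (G0 : Fin g → (Fin n → Fin (2 ^ ℓ)) → ℂ)
    (hnd : ¬ Degenerate (R ⟨0, hr⟩))
    (hR : ∀ i, R i = rtrans M (R0 i)) (hG : ∀ j, gtrans M (G j) = G0 j) :
    ∃ σ τ : Fin k, σ ≠ τ ∧
      LinearIndependent ℂ ![(fun i => M i σ), (fun i => M i τ)] ∧
      ∃ X : Matrix (Fin 2) (Fin k) ℂ, X.rank = 2 ∧ subM M σ τ * X = M ∧
        (subM M σ τ).rank = 2 ∧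
        (∀ X' : Matrix (Fin k) (Fin k) ℂ, IsUnit X'.det →
          X * X' = projMat k →
          (∀ i, restrict (rtrans X' (R i)) ⟨0, by omega⟩ ⟨1, by omega⟩ =
              rtrans (subM M σ τ) (R0 i)) ∧
          (∀ j, gtrans (subM M σ τ)
              (restrict (gtrans X'⁻¹ (G j)) ⟨0, by omega⟩ ⟨1, by omega⟩) =
                G0 j)) ∧
        (∀ i, R i = rtrans (subM M σ τ * X) (R0 i)) ∧
        (∀ j, gtrans (subM M σ τ * X) (G j) = G0 j) := by
  classical
  have hspan : Module.finrank ℂ ↥(Submodule.span ℂ (Set.range Mᵀ)) = 2 := by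
    exact (Matrix.rank_eq_finrank_span_cols (A := M)).symm.trans hM
  obtain ⟨b, hbs, hbspan, hbind⟩ := exists_linearIndependent ℂ (Set.range Mᵀ)
  have hbfin : b.Finite := Set.Finite.subset (Set.finite_range Mᵀ) hbs
  haveI : Fintype b := hbfin.fintype
  have hcard : b.toFinset.card = 2 := by
    rw [← finrank_span_set_eq_card hbind, hbspan]; exact hspan
  obtain ⟨v, w, hvw, hset⟩ := Finset.card_eq_two.mp hcard
  have hbeq : b = {v, w} := by
    rw [← Set.coe_toFinset b, hset]; simp
  have hvb : v ∈ b := by rw [hbeq]; left; rfl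
  have hwb : w ∈ b := by rw [hbeq]; right; rfl
  obtain ⟨σ, hσ⟩ := hbs hvb
  obtain ⟨τ, hτ⟩ := hbs hwb
  have hστ : σ ≠ τ := by
    intro h; apply hvw; rw [← hσ, ← hτ, h]
  have hpair : LinearIndependent ℂ ![v, w] := by
    have hf : Function.Injective (![⟨v, hvb⟩, ⟨w, hwb⟩] : Fin 2 → b) := by
      intro i j h
      fin_cases i <;> fin_cases j <;> simp_all [Subtype.ext_iff]
    have := hbind.comp _ hf
    convert this using 1
    funext i; fin_cases i <;> rfl
    all_goals rfl
  have hLI : LinearIndependent ℂ ![(fun i => M i σ), (fun i => M i τ)] := by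
    have heq : (![(fun i => M i σ), (fun i => M i τ)] : Fin 2 → (Fin (2 ^ ℓ) → ℂ))
        = ![v, w] := by
      funext i; fin_cases i
      · show (fun i => M i σ) = v
        rw [← hσ]; rfl
      · show (fun i => M i τ) = w
        rw [← hτ]; rfl
    rw [heq]; exact hpair
  have hmem : ∀ c : Fin k, ∃ x y : ℂ, x • v + y • w = Mᵀ c := by
    intro c
    rw [← Submodule.mem_span_pair]
    have h1 : Mᵀ c ∈ Submodule.span ℂ (Set.range Mᵀ) :=
      Submodule.subset_span ⟨c, rfl⟩
    rw [← hbspan, hbeq] at h1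
    exact h1
  choose a bb hab using hmem
  have hcoef : ∀ c i, a c * M i σ + bb c * M i τ = M i c := by
    intro c i
    have h := congrFun (hab c) i
    have hv : v i = M i σ := by rw [← hσ]; rfl
    have hw : w i = M i τ := by rw [← hτ]; rfl
    simp only [Pi.add_apply, Pi.smul_apply, smul_eq_mul, hv, hw,
      Matrix.transpose_apply] at h
    exact h
  set X : Matrix (Fin 2) (Fin k) ℂ :=
    Matrix.of (fun d c => if d = 0 then a c else bb c) with hXdef
  have hXM : subM M σ τ * X = M := by
    ext i c
    rw [Matrix.mul_apply, Fin.sum_univ_two]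
    show subM M σ τ i 0 * X 0 c + subM M σ τ i 1 * X 1 c = M i c
    simp only [subM, hXdef, Matrix.of_apply]
    rw [if_pos trivial, if_pos trivial, if_neg (by decide : ¬(1 : Fin 2) = 0),
      if_neg (by decide : ¬(1 : Fin 2) = 0)]
    rw [mul_comm (M i σ), mul_comm (M i τ)]
    exact hcoef c i
  have hXrank : X.rank = 2 := by
    have h1 : X.rank ≤ 2 := by simpa using X.rank_le_card_height
    have h2 : 2 ≤ X.rank := by
      have h3 := Matrix.rank_mul_le_right (subM M σ τ) X
      rw [hXM, hM] at h3; exact h3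
    omega
  have hsub : (subM M σ τ).rank = 2 := by
    have h1 : (subM M σ τ).rank ≤ 2 := by
      simpa using (subM M σ τ).rank_le_card_width
    have h2 : 2 ≤ (subM M σ τ).rank := by
      have h3 := Matrix.rank_mul_le_left (subM M σ τ) X
      rw [hXM, hM] at h3; exact h3
    omega
  refine ⟨σ, τ, hστ, hLI, X, hXrank, hXM, hsub, ?_, ?_, ?_⟩
  · intro X' hdet hXX'
    have hMX' : M * X' = subM M σ τ * projMat k := by
      conv_lhs => rw [← hXM]
      rw [Matrix.mul_assoc, hXX']
    constructor
    · intro i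
      rw [hR i, rtrans_comp, hMX', restr_rtrans hk]
    · intro j
      rw [gtrans_restr hk, gtrans_comp, ← hMX', Matrix.mul_assoc,
          Matrix.mul_nonsing_inv X' hdet, Matrix.mul_one, hG j]
  · intro i; rw [hXM]; exact hR i
  · intro j; rw [hXM]; exact hG j
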